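/- For every even integer k ≥ 4 and every positive integer n, S_k(n) ≤ S₂(n) · ∑_{i=0}^{k/2 − 1} C(n, 4i), where C(n, j) denotes the binomial coefficient. In particular, S₄(n) ≤ S₂(n)·(1 + C(n,4)). -/

import Mathlib

open scoped Classical

/-- A finite set of naturals is multiplicative `k`-Sidon if it contains no `2k`
distinct elements `a₁, …, aₖ, b₁, …, bₖ` with `a₁⋯aₖ = b₁⋯bₖ`. -/
def MulKSidon (k : ℕ) (A : Finset ℕ) : Prop :=
  ¬ ∃ a b : Fin k → ℕ, (∀ i, a i ∈ A) ∧ (∀ i, b i ∈ A) ∧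
    Function.Injective (Sum.elim a b) ∧ (∏ i, a i) = (∏ i, b i)

/-- `Sk k n`: the number of multiplicative `k`-Sidon subsets of `{1, …, n}`. -/
noncomputable def Sk (k n : ℕ) : ℕ :=
  ((Finset.Icc 1 n).powerset.filter (fun A => MulKSidon k A)).card

lemma prod_orderIso_aux {k : ℕ} (S : Finset ℕ) (h : S.card = k) :
    ∏ i : Fin k, ((S.orderIsoOfFin h i : ℕ)) = ∏ x ∈ S, x := by
  rw [← Finset.prod_coe_sort S (fun x => x)]
  exact Fintype.prod_equiv (S.orderIsoOfFin h).toEquiv _ _ (fun i => rfl)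

lemma mulKSidon_iff (k : ℕ) (A : Finset ℕ) :
    MulKSidon k A ↔
      ¬ ∃ S T : Finset ℕ, S ⊆ A ∧ T ⊆ A ∧ Disjoint S T ∧ S.card = k ∧ T.card = k ∧
        ∏ x ∈ S, x = ∏ x ∈ T, x := by
  unfold MulKSidon
  constructor
  · intro h hex
    apply h
    obtain ⟨S, T, hS, hT, hST, hSc, hTc, hp⟩ := hex
    refine ⟨fun i => (S.orderIsoOfFin hSc i : ℕ), fun i => (T.orderIsoOfFin hTc i : ℕ),
      fun i => hS (S.orderIsoOfFin hSc i).2, fun i => hT (T.orderIsoOfFin hTc i).2, ?_, ?_⟩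
    · rintro (i | i) (j | j) hij <;> simp only [Sum.elim_inl, Sum.elim_inr] at hij
      · have := (S.orderIsoOfFin hSc).injective (Subtype.ext hij)
        exact congrArg Sum.inl this
      · exact absurd ((T.orderIsoOfFin hTc j).2) (by
          rw [← hij] at *
          exact Finset.disjoint_left.mp hST (S.orderIsoOfFin hSc i).2 ∘ (hij ▸ id) )
      · exact absurd ((S.orderIsoOfFin hSc j).2)
          (fun hmem => Finset.disjoint_left.mp hST hmem (hij ▸ (T.orderIsoOfFin hTc i).2))
      · have := (T.orderIsoOfFin hTc).injective (Subtype.ext hij)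
        exact congrArg Sum.inr this
    · rw [prod_orderIso_aux S hSc, prod_orderIso_aux T hTc, hp]
  · rintro h ⟨a, b, ha, hb, hinj, hp⟩
    apply h
    have hai : Function.Injective a := fun i j hij => by
      have := hinj (a₁ := Sum.inl i) (a₂ := Sum.inl j) (by simpa using hij)
      simpa using this
    have hbi : Function.Injective b := fun i j hij => by
      have := hinj (a₁ := Sum.inr i) (a₂ := Sum.inr j) (by simpa using hij)
      simpa using this
    refine ⟨Finset.image a Finset.univ, Finset.image b Finset.univ, ?_, ?_, ?_, ?_, ?_, ?_⟩
    · intro x hx; obtain ⟨i, _, rfl⟩ := Finset.mem_image.mp hx; exact ha i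
    · intro x hx; obtain ⟨i, _, rfl⟩ := Finset.mem_image.mp hx; exact hb i
    · rw [Finset.disjoint_left]
      intro x hx hx'
      obtain ⟨i, _, rfl⟩ := Finset.mem_image.mp hx
      obtain ⟨j, _, hj⟩ := Finset.mem_image.mp hx'
      have := hinj (a₁ := Sum.inl i) (a₂ := Sum.inr j) (by simpa using hj.symm)
      simp at this
    · rw [Finset.card_image_of_injective _ hai, Finset.card_univ, Fintype.card_fin]
    · rw [Finset.card_image_of_injective _ hbi, Finset.card_univ, Fintype.card_fin]
    · rw [Finset.prod_image (fun i _ j _ hij => hai hij),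
        Finset.prod_image (fun i _ j _ hij => hbi hij)]
      exact hp

lemma key : ∀ m : ℕ, ∀ A : Finset ℕ, MulKSidon (2 * m) A →
    ∃ i < m, ∃ C ⊆ A, C.card = 4 * i ∧ MulKSidon 2 (A \ C) := by
  intro m
  induction m with
  | zero =>
    intro A hA
    exfalso
    rw [mulKSidon_iff] at hA
    exact hA ⟨∅, ∅, Finset.empty_subset A, Finset.empty_subset A, Finset.disjoint_empty_left ∅,
      by simp, by simp, rfl⟩
  | succ m ih =>
    intro A hA
    by_cases h2 : MulKSidon 2 A
    · exact ⟨0, Nat.succ_pos m, ∅, Finset.empty_subset A, by simp, by simpa using h2⟩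
    · rw [mulKSidon_iff] at h2
      rw [not_not] at h2
      obtain ⟨S, T, hS, hT, hST, hSc, hTc, hp⟩ := h2
      set Q := S ∪ T with hQ
      have hQA : Q ⊆ A := Finset.union_subset hS hT
      have hQc : Q.card = 4 := by
        rw [hQ, Finset.card_union_of_disjoint hST, hSc, hTc]
      rcases Nat.eq_zero_or_pos m with rfl | hm
      · -- 2*(0+1) = 2, hA says A is 2-Sidon, contradiction
        exfalso
        rw [mulKSidon_iff] at hA
        exact hA ⟨S, T, hS, hT, hST, hSc, hTc, hp⟩
      · have hAQ : MulKSidon (2 * m) (A \ Q) := by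
          rw [mulKSidon_iff]
          rintro ⟨S', T', hS', hT', hST', hSc', hTc', hp'⟩
          rw [mulKSidon_iff] at hA
          apply hA
          have hS'Q : Disjoint S' Q := Finset.disjoint_of_subset_left hS' Finset.sdiff_disjoint
          have hT'Q : Disjoint T' Q := Finset.disjoint_of_subset_left hT' Finset.sdiff_disjoint
          have hSS' : Disjoint S S' := (hS'Q.mono_right Finset.subset_union_left).symm
          have hTT' : Disjoint T T' := (hT'Q.mono_right Finset.subset_union_right).symm
          have hST'2 : Disjoint S T' := (hT'Q.mono_right Finset.subset_union_left).symm
          have hS'T : Disjoint S' T := hS'Q.mono_right Finset.subset_union_right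
          refine ⟨S ∪ S', T ∪ T', Finset.union_subset hS (hS'.trans Finset.sdiff_subset),
            Finset.union_subset hT (hT'.trans Finset.sdiff_subset), ?_, ?_, ?_, ?_⟩
          · rw [Finset.disjoint_union_left, Finset.disjoint_union_right,
              Finset.disjoint_union_right]
            exact ⟨⟨hST, hST'2⟩, hS'T, hST'⟩
          · rw [Finset.card_union_of_disjoint hSS', hSc, hSc']; ring
          · rw [Finset.card_union_of_disjoint hTT', hTc, hTc']; ring
          · rw [Finset.prod_union hSS', Finset.prod_union hTT', hp, hp']
        obtain ⟨i, hi, C, hC, hCc, hside⟩ := ih (A \ Q) hAQ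
        have hCQ : Disjoint C Q := Finset.disjoint_of_subset_left hC Finset.sdiff_disjoint
        refine ⟨i + 1, by omega, Q ∪ C, Finset.union_subset hQA (hC.trans Finset.sdiff_subset),
          ?_, ?_⟩
        · rw [Finset.card_union_of_disjoint hCQ.symm, hQc, hCc]; ring
        · have : A \ (Q ∪ C) = (A \ Q) \ C := by
            rw [Finset.sdiff_union_distrib]
            rw [Finset.sdiff_sdiff_left']
          rw [this]
          exact hside

theorem Sk_le_S2_mul_sum :
    ∀ k : ℕ, Even k → 4 ≤ k → ∀ n : ℕ, 0 < n →
      Sk k n ≤ Sk 2 n * ∑ i ∈ Finset.range (k / 2), n.choose (4 * i) := by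
  intro k hk hk4 n hn
  obtain ⟨m, rfl⟩ := hk
  have hm : 2 ≤ m := by omega
  have hdiv : (m + m) / 2 = m := by omega
  rw [hdiv]
  set D := (Finset.range m).biUnion (fun i => (Finset.Icc 1 n).powersetCard (4 * i)) with hD
  set T2 := (Finset.Icc 1 n).powerset.filter (fun A => MulKSidon 2 A) with hT2
  have hmain : ∀ A ∈ (Finset.Icc 1 n).powerset.filter (fun A => MulKSidon (m + m) A),
      ∃ p : Finset ℕ × Finset ℕ, p ∈ T2 ×ˢ D ∧ p.1 ∪ p.2 = A := by
    intro A hA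
    rw [Finset.mem_filter, Finset.mem_powerset] at hA
    obtain ⟨hAsub, hAk⟩ := hA
    have hA2m : MulKSidon (2 * m) A := by rwa [two_mul]
    obtain ⟨i, hi, C, hC, hCc, h2⟩ := key m A hA2m
    refine ⟨(A \ C, C), ?_, Finset.sdiff_union_of_subset hC⟩
    rw [Finset.mem_product]
    constructor
    · rw [hT2, Finset.mem_filter, Finset.mem_powerset]
      exact ⟨Finset.sdiff_subset.trans hAsub, h2⟩
    · rw [hD, Finset.mem_biUnion]
      exact ⟨i, Finset.mem_range.mpr hi, Finset.mem_powersetCard.mpr ⟨hC.trans hAsub, hCc⟩⟩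
  choose! f hf1 hf2 using hmain
  have hcard : Sk (m + m) n ≤ (T2 ×ˢ D).card := by
    apply Finset.card_le_card_of_injOn f hf1
    intro A hA B hB h
    rw [← hf2 A hA, ← hf2 B hB, h]
  have hDcard : D.card = ∑ i ∈ Finset.range m, n.choose (4 * i) := by
    rw [hD, Finset.card_biUnion]
    · apply Finset.sum_congr rfl
      intro i _
      rw [Finset.card_powersetCard, Nat.card_Icc]
      norm_num
    · intro i _ j _ hij
      simp only [Function.onFun]
      rw [Finset.disjoint_left]
      intro x hx hx'
      rw [Finset.mem_powersetCard] at hx hx'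
      omega
  calc Sk (m + m) n ≤ (T2 ×ˢ D).card := hcard
    _ = Sk 2 n * ∑ i ∈ Finset.range m, n.choose (4 * i) := by
        rw [Finset.card_product, hDcard]; rfl
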